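/- For all integers n, k, r ≥ 0, one has binom(n+k, n) · ∂^n(a_1^r b_1^k) = σ( B^r_{n+k+r,k+r} ), where σ : R → R is the unique ℚ-algebra homomorphism with σ(a_i) = a_i and σ(b_j) = j·b_j for all i, j ≥ 1. -/

import Mathlib

noncomputable section

/-- `R = ℚ[a_1,a_2,…;b_1,b_2,…]`, realized as the polynomial ring over `ℚ` with variables
`X (true, i) = a_i` and `X (false, i) = b_i`. -/
abbrev RR : Type := MvPolynomial (Bool × ℕ) ℚ

/-- the variable `a_i` -/
def va (i : ℕ) : RR := MvPolynomial.X (true, i)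
/-- the variable `b_i` -/
def vb (i : ℕ) : RR := MvPolynomial.X (false, i)

/-- the derivation `∂` of `R` with `∂ a_i = a_{i+1}` and `∂ b_i = b_{i+1}` -/
def del : RR → RR :=
  fun p => MvPolynomial.mkDerivation ℚ (fun s : Bool × ℕ => MvPolynomial.X (s.1, s.2 + 1)) p

/-- coefficientwise extension of a map on coefficients to `A[t]` (i.e. `∂` with `∂ t = 0`) -/
def polyLift {A : Type*} [Semiring A] (D : A → A) (p : Polynomial A) : Polynomial A :=
  p.sum fun i c => Polynomial.C (D c) * Polynomial.X ^ i

/-- the map `E : R[t] → R[t]`, `E(p) = t·b_1·p + ∂(p)` -/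
def EOp (p : Polynomial RR) : Polynomial RR :=
  Polynomial.C (vb 1) * Polynomial.X * p + polyLift del p

/-- the partial `r`-Bell polynomial `B^r_{n+r,k+r}`: the coefficient of `t^k` in `E^n(a_1^r)` -/
def rBell (n k r : ℕ) : RR := (EOp^[n] (Polynomial.C (va 1 ^ r))).coeff k

/-- Exponential of a formal multivariate power series (intended for series with zero
constant term): `exp(u) = ∑_{j≥0} u^j/j!`; for a series `u` of positive order only the
terms with `j ≤ |d|` contribute to the coefficient of a monomial of total degree `|d|`. -/
def sexp {σ : Type*} {A : Type*} [Ring A] [Algebra ℚ A] (u : MvPowerSeries σ A) :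
    MvPowerSeries σ A :=
  fun d => MvPowerSeries.coeff d
    (∑ j ∈ Finset.range (d.sum (fun _ m => m) + 1), (j.factorial : ℚ)⁻¹ • u ^ j)

/-- the `ℚ`-algebra endomorphism `σ` of `R` with `σ(a_i) = a_i` and `σ(b_j) = j·b_j` -/
def sigmaMap : RR →ₐ[ℚ] RR :=
  MvPolynomial.aeval (fun s : Bool × ℕ =>
    if s.1 then MvPolynomial.X s else (s.2 : RR) * MvPolynomial.X s)

-- ### basic del lemmas
def delD : Derivation ℚ RR RR :=
  MvPolynomial.mkDerivation ℚ (fun s : Bool × ℕ => MvPolynomial.X (s.1, s.2 + 1))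

lemma del_eq (p : RR) : del p = delD p := rfl

def delL : RR →ₗ[ℚ] RR := delD.toLinearMap

lemma del_eqL (p : RR) : del p = delL p := rfl

lemma del_iter_eq (m : ℕ) (p : RR) : del^[m] p = (delL ^ m) p := by
  induction m generalizing p with
  | zero => rfl
  | succ m ih =>
    rw [Function.iterate_succ_apply, ih, del_eqL, ← Module.End.mul_apply, ← pow_succ]

lemma del_va (i : ℕ) : del (va i) = va (i+1) := by
  rw [del_eq, delD, va, MvPolynomial.mkDerivation_X]; rfl

lemma del_vb (j : ℕ) : del (vb j) = vb (j+1) := by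
  rw [del_eq, delD, vb, MvPolynomial.mkDerivation_X]; rfl

lemma del_add (p q : RR) : del (p + q) = del p + del q := by
  rw [del_eq, del_eq, del_eq, map_add]

lemma del_mul (p q : RR) : del (p * q) = p * del q + q * del p := by
  rw [del_eq, del_eq, del_eq, Derivation.leibniz]; simp [smul_eq_mul]

lemma del_zero : del (0 : RR) = 0 := by rw [del_eq, map_zero]


-- ### coefficient lemmas
lemma polyLift_coeff (p : Polynomial RR) (k : ℕ) :
    (polyLift del p).coeff k = del (p.coeff k) := by
  unfold polyLift
  rw [Polynomial.sum, Polynomial.finset_sum_coeff]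
  have h1 : ∀ i ∈ p.support,
      (Polynomial.C (del (p.coeff i)) * Polynomial.X ^ i).coeff k
        = if k = i then del (p.coeff i) else 0 := by
    intro i _
    rw [Polynomial.coeff_C_mul, Polynomial.coeff_X_pow]
    by_cases h : k = i <;> simp [h]
  rw [Finset.sum_congr rfl h1, Finset.sum_ite_eq p.support k (fun i => del (p.coeff i))]
  by_cases h : k ∈ p.support
  · simp [h]
  · simp only [h, if_false]
    rw [Polynomial.notMem_support_iff.mp h, del_zero]

lemma EOp_coeff_succ (p : Polynomial RR) (k : ℕ) :
    (EOp p).coeff (k+1) = vb 1 * p.coeff k + del (p.coeff (k+1)) := by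
  unfold EOp
  rw [Polynomial.coeff_add, polyLift_coeff, mul_assoc, Polynomial.coeff_C_mul,
    Polynomial.coeff_X_mul]

lemma EOp_coeff_zero (p : Polynomial RR) :
    (EOp p).coeff 0 = del (p.coeff 0) := by
  unfold EOp
  rw [Polynomial.coeff_add, polyLift_coeff, mul_assoc, Polynomial.coeff_C_mul,
    mul_comm Polynomial.X p, Polynomial.mul_coeff_zero]
  simp

lemma rBell_zero (k r : ℕ) : rBell 0 k r = if k = 0 then va 1 ^ r else 0 := by
  unfold rBell
  rw [Function.iterate_zero_apply, Polynomial.coeff_C]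

lemma rBell_succ_succ (m k r : ℕ) :
    rBell (m+1) (k+1) r = vb 1 * rBell m k r + del (rBell m (k+1) r) := by
  unfold rBell
  rw [Function.iterate_succ_apply', EOp_coeff_succ]

lemma rBell_succ_zero (m r : ℕ) : rBell (m+1) 0 r = del (rBell m 0 r) := by
  unfold rBell
  rw [Function.iterate_succ_apply', EOp_coeff_zero]

lemma del_iter_add (m : ℕ) (x y : RR) : del^[m] (x+y) = del^[m] x + del^[m] y := by
  rw [del_iter_eq, del_iter_eq, del_iter_eq, map_add]

lemma del_iter_vb_mul (j m : ℕ) (q : RR) :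
    del^[m] (vb j * q)
      = ∑ i ∈ Finset.range (m+1), (m.choose i) • (vb (j+i) * del^[m-i] q) := by
  induction m generalizing j q with
  | zero => simp
  | succ m ih =>
    have key : del (vb j * q) = vb j * del q + vb (j+1) * q := by
      rw [del_mul, del_vb, mul_comm q]
    rw [Function.iterate_succ_apply, key, del_iter_add, ih, ih]
    have e1 : ∀ i ∈ Finset.range (m+1),
        (m.choose i) • (vb (j+i) * del^[m-i] (del q))
          = (m.choose i) • (vb (j+i) * del^[m+1-i] q) := by
      intro i hi
      rw [Finset.mem_range] at hi
      rw [← Function.iterate_succ_apply del (m-i) q,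
        show (m - i).succ = m + 1 - i by omega]
    have e2 : ∀ i ∈ Finset.range (m+1),
        (m.choose i) • (vb (j+1+i) * del^[m-i] q)
          = (m.choose i) • (vb (j+(i+1)) * del^[m+1-(i+1)] q) := by
      intro i _
      rw [show j+1+i = j+(i+1) by omega, show m - i = m+1-(i+1) by omega]
    rw [Finset.sum_congr rfl e1, Finset.sum_congr rfl e2]
    rw [Finset.sum_range_succ'
      (fun i => ((m+1).choose i) • (vb (j+i) * del^[m+1-i] q)) (m+1)]
    simp only [Nat.choose_succ_succ, add_smul, Finset.sum_add_distrib]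
    have e3 : ((m+1).choose 0) • (vb (j+0) * del^[m+1-0] q)
        = (m.choose 0) • (vb (j+0) * del^[m+1-0] q) := by norm_num
    rw [e3, add_assoc, ← Finset.sum_range_succ'
      (fun i => (m.choose i) • (vb (j+i) * del^[m+1-i] q)) (m+1)]
    conv_rhs => rw [Finset.sum_range_succ
      (fun i => (m.choose i) • (vb (j+i) * del^[m+1-i] q)) (m+1)]
    rw [Nat.choose_succ_self, zero_smul, add_zero, add_comm]

-- ### sigma on generators
lemma sigma_va (i : ℕ) : sigmaMap (va i) = va i := by
  unfold sigmaMap va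
  rw [MvPolynomial.aeval_X]
  simp

lemma sigma_vb (j : ℕ) : sigmaMap (vb j) = (j : RR) * vb j := by
  unfold sigmaMap vb
  rw [MvPolynomial.aeval_X]
  simp

lemma sigma_vb0 : sigmaMap (vb 0) = 0 := by rw [sigma_vb]; simp

-- ### the subalgebra of a-variables
def Aalg : Subalgebra ℚ RR := Algebra.adjoin ℚ (Set.range va)

lemma del_mem_Aalg {p : RR} (hp : p ∈ Aalg) : del p ∈ Aalg := by
  induction hp using Algebra.adjoin_induction with
  | mem x hx =>
    obtain ⟨i, rfl⟩ := hx
    rw [del_va]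
    exact Algebra.subset_adjoin ⟨i+1, rfl⟩
  | algebraMap r =>
    rw [del_eq, Derivation.map_algebraMap]
    exact zero_mem _
  | add x y hx hy ihx ihy =>
    rw [del_add]; exact add_mem ihx ihy
  | mul x y hx hy ihx ihy =>
    rw [del_mul]; exact add_mem (mul_mem hx ihy) (mul_mem hy ihx)

lemma sigma_fix_Aalg {p : RR} (hp : p ∈ Aalg) : sigmaMap p = p := by
  induction hp using Algebra.adjoin_induction with
  | mem x hx =>
    obtain ⟨i, rfl⟩ := hx
    exact sigma_va i
  | algebraMap r => exact sigmaMap.commutes r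
  | add x y hx hy ihx ihy => rw [map_add, ihx, ihy]
  | mul x y hx hy ihx ihy => rw [map_mul, ihx, ihy]

lemma del_iter_va_mem (r m : ℕ) : del^[m] (va 1 ^ r) ∈ Aalg := by
  induction m with
  | zero =>
    exact pow_mem (Algebra.subset_adjoin (Set.mem_range_self 1)) r
  | succ m ih =>
    rw [Function.iterate_succ_apply']
    exact del_mem_Aalg ih

-- nat lemmas (tested separately)
lemma sub_mul_choose (M j : ℕ) : (M - j) * M.choose j = M * (M-1).choose j := by
  cases M with
  | zero => simp
  | succ m =>
    rcases le_or_gt j m with h | h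
    · calc (m + 1 - j) * (m+1).choose j
          = (m+1).choose j * (m + 1 - j) := by ring
        _ = (m+1).choose (j+1) * (j+1) := by rw [Nat.choose_succ_right_eq]
        _ = (m+1) * m.choose j := by rw [← Nat.add_one_mul_choose_eq]
    · have : m + 1 - 1 = m := by omega
      rw [this, Nat.choose_eq_zero_of_lt h, Nat.sub_eq_zero_of_le (by omega)]
      simp

lemma choose_mul_descFactorial (k : ℕ) : ∀ m j : ℕ,
    m.choose j * (m - j).descFactorial k = m.descFactorial k * (m - k).choose j := by
  induction k with
  | zero => simp
  | succ k ih =>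
    intro m j
    rw [Nat.descFactorial_succ, Nat.descFactorial_succ]
    have h1 : m - j - k = m - k - j := by omega
    calc m.choose j * ((m - j - k) * (m - j).descFactorial k)
        = (m - k - j) * (m.choose j * (m - j).descFactorial k) := by rw [h1]; ring
      _ = (m - k - j) * (m.descFactorial k * (m - k).choose j) := by rw [ih]
      _ = m.descFactorial k * ((m - k - j) * (m - k).choose j) := by ring
      _ = m.descFactorial k * ((m - k) * (m - k - 1).choose j) := by rw [sub_mul_choose]
      _ = (m - k) * m.descFactorial k * (m - k - 1).choose j := by ring

lemma key_nat (m k j : ℕ) (hj : 1 ≤ j) :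
    j * (m.choose j * (m - j).descFactorial k)
      = m.descFactorial (k+1) * (m - (k+1)).choose (j-1) := by
  cases m with
  | zero => rw [Nat.choose_eq_zero_of_lt (by omega)]; simp
  | succ m =>
    obtain ⟨j', rfl⟩ : ∃ j', j = j' + 1 := ⟨j - 1, by omega⟩
    have h1 : (j' + 1) * (m+1).choose (j'+1) = (m+1) * m.choose j' := by
      have := Nat.add_one_mul_choose_eq m j'
      calc (j' + 1) * (m+1).choose (j'+1) = (m+1).choose (j'+1) * (j'+1) := by ring
        _ = (m+1) * m.choose j' := by rw [← this]
    have h2 : m + 1 - (j' + 1) = m - j' := by omega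
    have h3 : m + 1 - (k + 1) = m - k := by omega
    rw [← Nat.mul_assoc, h1, h2, Nat.succ_descFactorial_succ, h3,
      Nat.mul_assoc, choose_mul_descFactorial, Nat.add_sub_cancel, Nat.mul_assoc]

-- ### main induction
lemma sigma_del_iter (r : ℕ) : ∀ (k m : ℕ),
    sigmaMap (del^[m] (vb 0 ^ k * va 1 ^ r))
      = (m.descFactorial k) • del^[m - k] (vb 1 ^ k * va 1 ^ r) := by
  intro k
  induction k with
  | zero =>
    intro m
    simp only [pow_zero, one_mul, Nat.descFactorial_zero, one_smul, Nat.sub_zero]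
    exact sigma_fix_Aalg (del_iter_va_mem r m)
  | succ k ih =>
    intro m
    have h0 : vb 0 ^ (k+1) * va 1 ^ r = vb 0 * (vb 0 ^ k * va 1 ^ r) := by ring
    rw [h0, del_iter_vb_mul, map_sum]
    cases m with
    | zero =>
      simp only [Finset.range_one, Finset.sum_singleton, Nat.choose_self, one_smul,
        Function.iterate_zero_apply, Nat.zero_sub, map_mul, zero_add, sigma_vb0,
        Nat.descFactorial_succ, Nat.zero_sub, Nat.zero_mul, zero_smul, zero_mul]
    | succ m' =>
      set m := m' + 1 with hm
      set W : RR := vb 1 ^ k * va 1 ^ r with hW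
      have e1 : ∀ i ∈ Finset.range (m+1),
          sigmaMap ((m.choose i) • (vb (0+i) * del^[m-i] (vb 0 ^ k * va 1 ^ r)))
            = (i * (m.choose i * (m-i).descFactorial k)) •
                (vb i * del^[m-i-k] W) := by
        intro i _
        rw [map_nsmul, map_mul, zero_add, sigma_vb, ih (m-i), mul_smul_comm,
          mul_assoc, ← nsmul_eq_mul, smul_smul, smul_smul,
          show m.choose i * (m-i).descFactorial k * i
            = i * (m.choose i * (m-i).descFactorial k) by ring]
      rw [Finset.sum_congr rfl e1,
        show vb 1 ^ (k+1) * va 1 ^ r = vb 1 * W by rw [hW]; ring,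
        del_iter_vb_mul, Finset.smul_sum]
      set M := m - (k+1) with hM
      have hMm : M + 1 ≤ m := by omega
      have hz : ∀ x ∈ Finset.range m, x ∉ Finset.range (M+1) →
          m.descFactorial (k+1) • ((M.choose x) • (vb (1+x) * del^[M-x] W)) = 0 := by
        intro x _ hx
        rw [Finset.mem_range, not_lt] at hx
        rw [Nat.choose_eq_zero_of_lt (by omega), zero_smul, smul_zero]
      rw [Finset.sum_subset (Finset.range_subset_range.mpr hMm) hz,
        Finset.sum_range_succ'
          (fun i => (i * (m.choose i * (m-i).descFactorial k)) •
            (vb i * del^[m-i-k] W)) m]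
      simp only [zero_mul, zero_smul, add_zero]
      refine Finset.sum_congr rfl ?_
      intro i hi
      have hkey := key_nat m k (i+1) (by omega)
      rw [Nat.add_sub_cancel] at hkey
      rw [smul_smul, hkey]
      by_cases hze : m.descFactorial (k+1) * ((m - (k+1)).choose i) = 0
      · rw [hM, hze, zero_smul, zero_smul]
      · have h1 : ¬ (m < k + 1) := fun hlt => hze (by
          rw [Nat.descFactorial_eq_zero_iff_lt.mpr hlt, zero_mul])
        have h2 : i ≤ m - (k+1) := by
          by_contra hco
          exact hze (by rw [Nat.choose_eq_zero_of_lt (by omega), mul_zero])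
        rw [show m - (i+1) - k = M - i by omega, show i + 1 = 1 + i by omega, hM]

-- ### closed form for rBell
def alphaC (k l : ℕ) : ℚ := (-1)^l * ((l.factorial * (k-l).factorial : ℕ) : ℚ)⁻¹

lemma alt_sum_q (k : ℕ) :
    ∑ l ∈ Finset.range (k+1), alphaC k l = if k = 0 then 1 else 0 := by
  have h := Int.alternating_sum_range_choose (n := k)
  have h2 : ∑ l ∈ Finset.range (k+1), ((-1:ℚ)^l * (k.choose l : ℚ))
      = if k = 0 then 1 else 0 := by
    have := congrArg (fun z : ℤ => (z : ℚ)) h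
    push_cast at this
    convert this using 2

  have e : ∀ l ∈ Finset.range (k+1),
      alphaC k l = (k.factorial : ℚ)⁻¹ * ((-1:ℚ)^l * (k.choose l : ℚ)) := by
    intro l hl
    rw [Finset.mem_range] at hl
    unfold alphaC
    rw [Nat.cast_choose ℚ (by omega : l ≤ k)]
    have h1 : ((l.factorial : ℚ)) ≠ 0 := Nat.cast_ne_zero.mpr l.factorial_ne_zero
    have h2 : (((k-l).factorial : ℚ)) ≠ 0 := Nat.cast_ne_zero.mpr (k-l).factorial_ne_zero
    have h3 : ((k.factorial : ℚ)) ≠ 0 := Nat.cast_ne_zero.mpr k.factorial_ne_zero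
    push_cast
    field_simp
    try ring
  rw [Finset.sum_congr rfl e, ← Finset.mul_sum, h2]
  split_ifs with h
  · subst h; norm_num
  · rw [mul_zero]

lemma alpha_succ (k l : ℕ) (hl : l ≤ k) :
    alphaC (k+1) (l+1) * ((l+1 : ℕ) : ℚ) = - alphaC k l := by
  unfold alphaC
  rw [show k+1-(l+1) = k-l by omega, pow_succ, Nat.factorial_succ]
  have h1 : ((l.factorial : ℚ)) ≠ 0 := Nat.cast_ne_zero.mpr l.factorial_ne_zero
  have h2 : (((k-l).factorial : ℚ)) ≠ 0 := Nat.cast_ne_zero.mpr (k-l).factorial_ne_zero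
  push_cast
  field_simp

lemma del_sum {s : Finset ℕ} (f : ℕ → RR) :
    del (∑ i ∈ s, f i) = ∑ i ∈ s, del (f i) := by
  simp only [del_eqL]; exact map_sum delL f s

lemma del_qsmul (q : ℚ) (x : RR) : del (q • x) = q • del x := by
  simp only [del_eqL]; exact map_smul delL q x

lemma del_pow (x : RR) (l : ℕ) : del (x ^ l) = l • (x^(l-1) * del x) := by
  rw [del_eq, Derivation.leibniz_pow]
  rfl

lemma rBell_closed (r : ℕ) : ∀ (m k : ℕ),
    rBell m k r = ∑ l ∈ Finset.range (k+1),
      (alphaC k l) • (vb 0 ^ l * del^[m] (vb 0 ^ (k-l) * va 1 ^ r)) := by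
  intro m
  induction m with
  | zero =>
    intro k
    rw [rBell_zero]
    have e : ∀ l ∈ Finset.range (k+1),
        (alphaC k l) • (vb 0 ^ l * del^[0] (vb 0 ^ (k-l) * va 1 ^ r))
          = (alphaC k l) • (vb 0 ^ k * va 1 ^ r) := by
      intro l hl
      rw [Finset.mem_range] at hl
      rw [Function.iterate_zero_apply, ← mul_assoc, ← pow_add,
        show l + (k - l) = k by omega]
    rw [Finset.sum_congr rfl e, ← Finset.sum_smul, alt_sum_q]
    split_ifs with h
    · subst h; simp
    · rw [zero_smul]
  | succ m ihm =>
    intro k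
    cases k with
    | zero =>
      rw [rBell_succ_zero, ihm 0, del_sum]
      simp [del_qsmul, ← Function.iterate_succ_apply' del m]
    | succ k =>
      rw [rBell_succ_succ, ihm k, ihm (k+1), del_sum, Finset.mul_sum]
      simp only [del_qsmul]
      have hterm : ∀ l ∈ Finset.range (k+2),
          (alphaC (k+1) l) • del (vb 0 ^ l * del^[m] (vb 0 ^ (k+1-l) * va 1 ^ r))
            = (alphaC (k+1) l) • (vb 0 ^ l * del^[m+1] (vb 0 ^ (k+1-l) * va 1 ^ r))
              + (alphaC (k+1) l) • (del^[m] (vb 0 ^ (k+1-l) * va 1 ^ r)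
                  * (l • (vb 0 ^ (l-1) * vb 1))) := by
        intro l _
        rw [del_mul, del_pow, del_vb, ← Function.iterate_succ_apply' del m, smul_add]
      rw [Finset.sum_congr rfl hterm, Finset.sum_add_distrib]
      have hS : (∑ l ∈ Finset.range (k+1),
            (alphaC k l) • (vb 1 * (vb 0 ^ l * del^[m] (vb 0 ^ (k-l) * va 1 ^ r))))
          + (∑ l ∈ Finset.range (k+2),
            (alphaC (k+1) l) • (del^[m] (vb 0 ^ (k+1-l) * va 1 ^ r)
              * (l • (vb 0 ^ (l-1) * vb 1)))) = 0 := by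
        rw [Finset.sum_range_succ'
          (fun l => (alphaC (k+1) l) • (del^[m] (vb 0 ^ (k+1-l) * va 1 ^ r)
            * (l • (vb 0 ^ (l-1) * vb 1)))) (k+1)]
        simp only [zero_smul, mul_zero, smul_zero, add_zero]
        rw [← Finset.sum_add_distrib]
        apply Finset.sum_eq_zero
        intro l hl
        rw [Finset.mem_range] at hl
        rw [show k+1-(l+1) = k-l by omega, show l+1-1 = l by omega,
          mul_smul_comm, ← Nat.cast_smul_eq_nsmul ℚ, smul_smul,
          alpha_succ k l (by omega), neg_smul,
          show del^[m] (vb 0 ^ (k-l) * va 1 ^ r) * (vb 0 ^ l * vb 1)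
            = vb 1 * (vb 0 ^ l * del^[m] (vb 0 ^ (k-l) * va 1 ^ r)) by ring,
          add_neg_cancel]
      have hA : ∀ l ∈ Finset.range (k+1),
          vb 1 * ((alphaC k l) • (vb 0 ^ l * del^[m] (vb 0 ^ (k-l) * va 1 ^ r)))
            = (alphaC k l) • (vb 1 * (vb 0 ^ l * del^[m] (vb 0 ^ (k-l) * va 1 ^ r))) := by
        intro l _
        rw [mul_smul_comm]
      rw [Finset.sum_congr rfl hA]
      linear_combination hS

lemma sigma_rBell (m k r : ℕ) :
    sigmaMap (rBell m k r)
      = (k.factorial : ℚ)⁻¹ • sigmaMap (del^[m] (vb 0 ^ k * va 1 ^ r)) := by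
  rw [rBell_closed, map_sum]
  rw [Finset.sum_eq_single 0 ?h1 ?h2]
  · rw [map_smul, pow_zero, one_mul, Nat.sub_zero]
    congr 1
    unfold alphaC
    norm_num
  case h1 =>
    intro l _ hl
    obtain ⟨l', rfl⟩ : ∃ l'', l = l'' + 1 := ⟨l - 1, by omega⟩
    rw [map_smul, map_mul, map_pow, sigma_vb0, zero_pow (by omega), zero_mul, smul_zero]
  case h2 =>
    intro h
    exact absurd (Finset.mem_range.mpr (by omega)) h


/-- For all `n, k, r ≥ 0`,
`binom(n+k,n) · ∂^n(a_1^r b_1^k) = σ(B^r_{n+k+r,k+r})`, where `σ : R → R` is the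
`ℚ`-algebra homomorphism with `σ(a_i) = a_i` and `σ(b_j) = j·b_j`. -/
theorem stmt8 (n k r : ℕ) :
    (((n + k).choose n : ℕ) : RR) * del^[n] (va 1 ^ r * vb 1 ^ k) =
      sigmaMap (rBell (n + k) k r) := by
  rw [sigma_rBell, sigma_del_iter, show n + k - k = n by omega,
    Nat.descFactorial_eq_factorial_mul_choose,
    ← Nat.cast_smul_eq_nsmul ℚ, smul_smul]
  have h3 : ((k.factorial : ℚ)) ≠ 0 := Nat.cast_ne_zero.mpr k.factorial_ne_zero
  have hc : (k.factorial : ℚ)⁻¹ * ((k.factorial * (n+k).choose k : ℕ) : ℚ)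
      = (((n+k).choose k : ℕ) : ℚ) := by
    push_cast
    field_simp
  rw [hc]
  have hsym : (n+k).choose n = (n+k).choose k := by
    rw [← Nat.choose_symm (Nat.le_add_left k n), Nat.add_sub_cancel]
  rw [hsym, mul_comm (va 1 ^ r) (vb 1 ^ k), Nat.cast_smul_eq_nsmul, nsmul_eq_mul]
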